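/- arXiv:2308.08690 — 2 statements merged into one kernel-verified Lean document; each statement's English description precedes it below -/
import Mathlib

section
/- (Cycle Merging Lemma) Let c be a shortening-monotone nonnegative cost function on directed links. Let S, A ⊆ V(H) with |S| ≥ 2, |A| ≥ 2, r = 0 ∈ S, and suppose S and A are intersecting as hyper-links. If F_S is a directed cycle on S and F_A is a directed cycle on A, then there exists a directed cycle F_{S∪A} on S ∪ A whose cost is at most c(F_S) + c(F_A). -/
/-- `(s,t)` is a shortening of `(u,v)`: `t = v`, `s ≠ v`, and `min(u,v) ≤ s ≤ max(u,v)`. -/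
def Shortening (f g : ℕ × ℕ) : Prop :=
  f.2 = g.2 ∧ f.1 ≠ g.2 ∧ min g.1 g.2 ≤ f.1 ∧ f.1 ≤ max g.1 g.2

/-- Two hyper-links are intersecting if they share a vertex, or each has a vertex strictly
between two vertices of the other. -/
def Intersecting (ℓ ℓ' : Finset ℕ) : Prop :=
  (ℓ ∩ ℓ').Nonempty ∨
    ((∃ x ∈ ℓ, ∃ y₁ ∈ ℓ', ∃ y₂ ∈ ℓ', y₁ < x ∧ x < y₂) ∧
      (∃ y ∈ ℓ', ∃ x₁ ∈ ℓ, ∃ x₂ ∈ ℓ, x₁ < y ∧ y < x₂))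

/-- The link multiset of a cyclic sequence `t₁, …, t_k`:
`(t₁,t₂), …, (t_{k-1},t_k), (t_k,t₁)`. -/
def cycleLinks (l : List ℕ) : List (ℕ × ℕ) := l.zip (l.rotate 1)

/-- `l` is a directed cycle on `T`: a cyclic sequence of length at least 2 of vertices of
`V(H)`, with consecutive entries (cyclically) distinct, whose set of entries is exactly `T`. -/
def IsDirCycleOn (n : ℕ) (T : Finset ℕ) (l : List ℕ) : Prop :=
  2 ≤ l.length ∧ (∀ x ∈ l, x < n) ∧ (∀ p ∈ cycleLinks l, p.1 ≠ p.2) ∧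
    ∀ x : ℕ, x ∈ l ↔ x ∈ T

/-- The cost of a directed cycle: the sum of the costs of its links, with multiplicity. -/
def cycleCost (c : ℕ × ℕ → ℝ) (l : List ℕ) : ℝ := ((cycleLinks l).map c).sum

def chain2 : List ℕ → ℕ → List (ℕ × ℕ)
  | [], _ => []
  | [a], e => [(a, e)]
  | a :: b :: t, e => (a, b) :: chain2 (b :: t) e

lemma rotate_one_cons (a : ℕ) (l : List ℕ) : (a :: l).rotate 1 = l ++ [a] := by
  rw [show (1:ℕ) = 0 + 1 from rfl, List.rotate_cons_succ, List.rotate_zero]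

lemma zip_shift (t : List ℕ) : ∀ h e : ℕ, (h :: t).zip (t ++ [e]) = chain2 (h :: t) e := by
  induction t with
  | nil => intro h e; simp [chain2]
  | cons b t' ih =>
      intro h e
      show (h, b) :: (b :: t').zip (t' ++ [e]) = _
      rw [ih b e]; rfl

lemma cycleLinks_cons (h : ℕ) (t : List ℕ) : cycleLinks (h :: t) = chain2 (h :: t) h := by
  rw [cycleLinks, rotate_one_cons, zip_shift]

lemma chain2_append (m₂ : List ℕ) : ∀ (m₁ : List ℕ) (b e : ℕ),
    chain2 (m₁ ++ b :: m₂) e = chain2 m₁ b ++ chain2 (b :: m₂) e := by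
  intro m₁
  induction m₁ with
  | nil => intro b e; simp [chain2]
  | cons a t ih =>
      intro b e
      cases t with
      | nil => simp [chain2]
      | cons a' t' =>
          show (a, a') :: chain2 ((a' :: t') ++ b :: m₂) e = _
          rw [ih b e]; rfl

lemma zip_rotate_one (a b : List ℕ) (h : a.length = b.length) :
    (a.rotate 1).zip (b.rotate 1) = (a.zip b).rotate 1 := by
  cases a with
  | nil => cases b with
    | nil => rfl
    | cons y bs => simp at h
  | cons x as =>
      cases b with
      | nil => simp at h
      | cons y bs =>
          simp only [List.length_cons, Nat.add_right_cancel_iff] at h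
          rw [rotate_one_cons, rotate_one_cons, List.zip_append h]
          have : ((x, y) :: as.zip bs).rotate 1 = as.zip bs ++ [(x,y)] := by
            rw [show (1:ℕ) = 0 + 1 from rfl, List.rotate_cons_succ, List.rotate_zero]
          show as.zip bs ++ [(x,y)] = ((x :: as).zip (y :: bs)).rotate 1
          rw [List.zip_cons_cons, this]

lemma cycleLinks_rotate (l : List ℕ) (k : ℕ) :
    cycleLinks (l.rotate k) = (cycleLinks l).rotate k := by
  induction k generalizing l with
  | zero => simp
  | succ k ih =>
      have h1 : l.rotate (k + 1) = (l.rotate 1).rotate k := by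
        rw [List.rotate_rotate, Nat.add_comm]
      rw [h1, ih]
      have h2 : cycleLinks (l.rotate 1) = (cycleLinks l).rotate 1 := by
        rw [cycleLinks, cycleLinks]
        have := zip_rotate_one l (l.rotate 1) (by simp)
        rw [List.rotate_rotate] at this
        rw [show (1:ℕ)+1 = 2 from rfl] at this
        rw [show (l.rotate 1).rotate 1 = l.rotate 2 by rw [List.rotate_rotate]]
        exact this
      rw [h2, List.rotate_rotate, Nat.add_comm]

lemma cycleLinks_rotate_perm (l : List ℕ) (k : ℕ) :
    (cycleLinks (l.rotate k)).Perm (cycleLinks l) := by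
  rw [cycleLinks_rotate]; exact List.rotate_perm _ _

lemma cycleCost_rotate (c : ℕ × ℕ → ℝ) (l : List ℕ) (k : ℕ) :
    cycleCost c (l.rotate k) = cycleCost c l :=
  ((cycleLinks_rotate_perm l k).map c).sum_eq

lemma isDirCycleOn_rotate {n : ℕ} {T : Finset ℕ} {l : List ℕ} (h : IsDirCycleOn n T l) (k : ℕ) :
    IsDirCycleOn n T (l.rotate k) := by
  obtain ⟨h1, h2, h3, h4⟩ := h
  refine ⟨by simpa using h1, fun x hx => h2 x (by simpa using hx),
    fun p hp => h3 p ((cycleLinks_rotate_perm l k).mem_iff.mp hp),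
    fun x => by rw [List.mem_rotate]; exact h4 x⟩

lemma chain2_exit (P : ℕ → Prop) : ∀ (m : List ℕ) (e : ℕ), (∃ z ∈ m, P z) → ¬ P e →
    ∃ p ∈ chain2 m e, P p.1 ∧ ¬ P p.2 := by
  intro m
  induction m with
  | nil => rintro e ⟨z, hz, _⟩ _; simp at hz
  | cons a t ih =>
      intro e hz he
      cases t with
      | nil =>
          obtain ⟨z, hz, hPz⟩ := hz
          simp only [List.mem_singleton] at hz
          subst hz
          exact ⟨(z, e), by simp [chain2], hPz, he⟩
      | cons b t' =>
          by_cases hb : ∃ z ∈ b :: t', P z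
          · obtain ⟨p, hp, h⟩ := ih e hb he
            exact ⟨p, List.mem_cons_of_mem _ hp, h⟩
          · obtain ⟨z, hz, hPz⟩ := hz
            have hza : z = a := by
              rcases List.mem_cons.mp hz with h | h
              · exact h
              · exact absurd ⟨z, h, hPz⟩ hb
            subst hza
            have hnb : ¬ P b := fun h => hb ⟨b, List.mem_cons_self, h⟩
            exact ⟨(z, b), List.mem_cons_self, hPz, hnb⟩

lemma cycle_exit (P : ℕ → Prop) (l : List ℕ) (x y : ℕ) (hx : x ∈ l) (hy : y ∈ l)
    (hPx : P x) (hPy : ¬ P y) : ∃ p ∈ cycleLinks l, P p.1 ∧ ¬ P p.2 := by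
  obtain ⟨l₁, l₂, rfl⟩ := List.append_of_mem hy
  have hk : l₁.length ≤ (l₁ ++ y :: l₂).length := by simp
  have hrot : (l₁ ++ y :: l₂).rotate l₁.length = y :: (l₂ ++ l₁) := by
    rw [List.rotate_eq_drop_append_take hk, List.drop_left, List.take_left]; rfl
  have hxmem : x ∈ y :: (l₂ ++ l₁) := by
    rw [← hrot, List.mem_rotate]; exact hx
  have hxmem' : ∃ z ∈ y :: (l₂ ++ l₁), P z := ⟨x, hxmem, hPx⟩
  obtain ⟨p, hp, h⟩ := chain2_exit P (y :: (l₂ ++ l₁)) y hxmem' hPy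
  refine ⟨p, ?_, h⟩
  have : p ∈ cycleLinks ((l₁ ++ y :: l₂).rotate l₁.length) := by
    rw [hrot, cycleLinks_cons]; exact hp
  exact (cycleLinks_rotate_perm _ _).mem_iff.mp this

lemma chain2_mem_split : ∀ (m : List ℕ) (e : ℕ) (p : ℕ × ℕ), p ∈ chain2 m e →
    (∃ m₁ m₂, m = m₁ ++ p.1 :: p.2 :: m₂) ∨ (p.2 = e ∧ ∃ m₁, m = m₁ ++ [p.1]) := by
  intro m
  induction m with
  | nil => intro e p hp; simp [chain2] at hp
  | cons a t ih =>
      intro e p hp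
      cases t with
      | nil =>
          simp [chain2] at hp
          subst hp
          exact Or.inr ⟨rfl, [], rfl⟩
      | cons b t' =>
          rcases List.mem_cons.mp hp with h | h
          · subst h; exact Or.inl ⟨[], t', rfl⟩
          · rcases ih e p h with ⟨m₁, m₂, hm⟩ | ⟨he, m₁, hm⟩
            · exact Or.inl ⟨a :: m₁, m₂, by rw [hm]; rfl⟩
            · exact Or.inr ⟨he, a :: m₁, by rw [hm]; rfl⟩

lemma exists_rotation_split (l : List ℕ) (p : ℕ × ℕ) (hp : p ∈ cycleLinks l)
    (h2 : 2 ≤ l.length) : ∃ (k : ℕ) (t : List ℕ), l.rotate k = p.2 :: t ++ [p.1] := by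
  cases l with
  | nil => simp [cycleLinks] at hp
  | cons h t0 =>
      rw [cycleLinks_cons] at hp
      rcases chain2_mem_split _ _ _ hp with ⟨m₁, m₂, hm⟩ | ⟨he, m₁, hm⟩
      · refine ⟨m₁.length + 1, m₂ ++ m₁, ?_⟩
        have hl : h :: t0 = (m₁ ++ [p.1]) ++ p.2 :: m₂ := by rw [hm]; simp
        have hk : m₁.length + 1 ≤ (h :: t0).length := by
          rw [hl]; simp
        rw [List.rotate_eq_drop_append_take hk]
        rw [hl]
        rw [show m₁.length + 1 = (m₁ ++ [p.1]).length by simp]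
        rw [List.drop_left, List.take_left]
        simp
      · cases m₁ with
        | nil =>
            exfalso
            have : (h :: t0).length = 1 := by rw [hm]; rfl
            omega
        | cons a m₁' =>
            have ha : h = a ∧ t0 = m₁' ++ [p.1] := by
              have := hm
              rw [List.cons_append] at this
              exact ⟨List.head_eq_of_cons_eq this, List.tail_eq_of_cons_eq this⟩
            refine ⟨0, m₁', ?_⟩
            rw [List.rotate_zero, ha.2, he, ha.1]
            rfl

lemma chain2_cons_cons (a b : ℕ) (t : List ℕ) (e : ℕ) :
    chain2 (a :: b :: t) e = (a, b) :: chain2 (b :: t) e := rfl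

lemma chain2_split (h : ℕ) (m₁ : List ℕ) (b e : ℕ) (m₂ : List ℕ) :
    chain2 (h :: (m₁ ++ b :: m₂)) e = chain2 (h :: m₁) b ++ chain2 (b :: m₂) e := by
  rw [← List.cons_append, chain2_append]

lemma cycleLinks_tail_form (b : ℕ) (tS : List ℕ) (a : ℕ) :
    cycleLinks (b :: tS ++ [a]) = chain2 (b :: tS) a ++ [(a, b)] := by
  have e : (b :: tS) ++ [a] = b :: (tS ++ [a]) := List.cons_append
  rw [e, cycleLinks_cons, ← e, chain2_append]
  rfl

lemma splice (n : ℕ) (c : ℕ × ℕ → ℝ) (S A : Finset ℕ) (lS lA : List ℕ)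
    (hS : IsDirCycleOn n S lS) (hA : IsDirCycleOn n A lA)
    (a b u v : ℕ) (hab : (a, b) ∈ cycleLinks lS) (huv : (u, v) ∈ cycleLinks lA)
    (h1 : c (a, v) ≤ c (u, v)) (h2 : c (u, b) ≤ c (a, b)) (hub : u ≠ b) (hav : a ≠ v) :
    ∃ l : List ℕ, IsDirCycleOn n (S ∪ A) l ∧
      cycleCost c l ≤ cycleCost c lS + cycleCost c lA := by
  obtain ⟨kS, tS, hS'⟩ := exists_rotation_split lS (a, b) hab hS.1
  obtain ⟨kA, tA, hA'⟩ := exists_rotation_split lA (u, v) huv hA.1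
  simp only at hS' hA'
  have hSrot : IsDirCycleOn n S (b :: tS ++ [a]) := hS' ▸ isDirCycleOn_rotate hS kS
  have hArot : IsDirCycleOn n A (v :: tA ++ [u]) := hA' ▸ isDirCycleOn_rotate hA kA
  refine ⟨(v :: tA ++ [u]) ++ (b :: tS ++ [a]), ?_, ?_⟩
  · have hlinks : cycleLinks ((v :: tA ++ [u]) ++ (b :: tS ++ [a])) =
        chain2 (v :: tA) u ++ ((u, b) :: (chain2 (b :: tS) a ++ [(a, v)])) := by
      have e1 : (v :: tA ++ [u]) ++ (b :: tS ++ [a])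
          = v :: (tA ++ u :: (b :: (tS ++ [a]))) := by simp
      rw [e1, cycleLinks_cons, ← e1]
      rw [show (v :: tA ++ [u]) ++ (b :: tS ++ [a])
          = v :: (tA ++ u :: (b :: (tS ++ [a]))) from e1]
      rw [chain2_split, chain2_cons_cons, chain2_split]
      rfl
    have hmem : ∀ x : ℕ, x ∈ (v :: tA ++ [u]) ++ (b :: tS ++ [a]) ↔
        x ∈ v :: tA ++ [u] ∨ x ∈ b :: tS ++ [a] := fun x => List.mem_append
    refine ⟨by simp; omega, ?_, ?_, ?_⟩
    · intro x hx
      rcases (hmem x).mp hx with h | h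
      · exact hArot.2.1 x h
      · exact hSrot.2.1 x h
    · intro p hp
      rw [hlinks] at hp
      rcases List.mem_append.mp hp with h | h
      · exact hArot.2.2.1 p (by rw [cycleLinks_tail_form]; exact List.mem_append_left _ h)
      · rcases List.mem_cons.mp h with h | h
        · subst h; exact hub
        · rcases List.mem_append.mp h with h | h
          · exact hSrot.2.2.1 p (by rw [cycleLinks_tail_form]; exact List.mem_append_left _ h)
          · simp only [List.mem_singleton] at h; subst h; exact hav
    · intro x
      rw [hmem x, hArot.2.2.2 x, hSrot.2.2.2 x, Finset.mem_union]
      tauto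
  · have costS : cycleCost c lS = ((chain2 (b :: tS) a).map c).sum + c (a, b) := by
      rw [← cycleCost_rotate c lS kS, hS', cycleCost, cycleLinks_tail_form]
      simp
    have costA : cycleCost c lA = ((chain2 (v :: tA) u).map c).sum + c (u, v) := by
      rw [← cycleCost_rotate c lA kA, hA', cycleCost, cycleLinks_tail_form]
      simp
    have hlinks : cycleLinks ((v :: tA ++ [u]) ++ (b :: tS ++ [a])) =
        chain2 (v :: tA) u ++ ((u, b) :: (chain2 (b :: tS) a ++ [(a, v)])) := by
      have e1 : (v :: tA ++ [u]) ++ (b :: tS ++ [a])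
          = v :: (tA ++ u :: (b :: (tS ++ [a]))) := by simp
      rw [e1, cycleLinks_cons, ← e1]
      rw [show (v :: tA ++ [u]) ++ (b :: tS ++ [a])
          = v :: (tA ++ u :: (b :: (tS ++ [a]))) from e1]
      rw [chain2_split, chain2_cons_cons, chain2_split]
      rfl
    rw [cycleCost, hlinks, costS, costA]
    simp only [List.map_append, List.sum_append, List.map_cons, List.sum_cons,
      List.map_nil, List.sum_nil]
    linarith

lemma exists_rotation_head (l : List ℕ) (x : ℕ) (hx : x ∈ l) :
    ∃ (k : ℕ) (t : List ℕ), l.rotate k = x :: t := by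
  obtain ⟨l₁, l₂, rfl⟩ := List.append_of_mem hx
  refine ⟨l₁.length, l₂ ++ l₁, ?_⟩
  rw [List.rotate_eq_drop_append_take (by simp), List.drop_left, List.take_left]
  rfl

lemma splice_common (n : ℕ) (c : ℕ × ℕ → ℝ) (S A : Finset ℕ) (lS lA : List ℕ)
    (hS : IsDirCycleOn n S lS) (hA : IsDirCycleOn n A lA)
    (w : ℕ) (hwS : w ∈ S) (hwA : w ∈ A) :
    ∃ l : List ℕ, IsDirCycleOn n (S ∪ A) l ∧
      cycleCost c l ≤ cycleCost c lS + cycleCost c lA := by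
  obtain ⟨kS, tS, hS'⟩ := exists_rotation_head lS w ((hS.2.2.2 w).mpr hwS)
  obtain ⟨kA, tA, hA'⟩ := exists_rotation_head lA w ((hA.2.2.2 w).mpr hwA)
  have hSrot : IsDirCycleOn n S (w :: tS) := hS' ▸ isDirCycleOn_rotate hS kS
  have hArot : IsDirCycleOn n A (w :: tA) := hA' ▸ isDirCycleOn_rotate hA kA
  refine ⟨(w :: tS) ++ (w :: tA), ?_, ?_⟩
  · have hlinks : cycleLinks ((w :: tS) ++ (w :: tA)) =
        cycleLinks (w :: tS) ++ cycleLinks (w :: tA) := by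
      have e1 : (w :: tS) ++ (w :: tA) = w :: (tS ++ w :: tA) := List.cons_append
      rw [e1, cycleLinks_cons, chain2_split, cycleLinks_cons, cycleLinks_cons]
    refine ⟨by simp; omega, ?_, ?_, ?_⟩
    · intro x hx
      rcases List.mem_append.mp hx with h | h
      · exact hSrot.2.1 x h
      · exact hArot.2.1 x h
    · intro p hp
      rw [hlinks] at hp
      rcases List.mem_append.mp hp with h | h
      · exact hSrot.2.2.1 p h
      · exact hArot.2.2.1 p h
    · intro x
      rw [List.mem_append, hSrot.2.2.2 x, hArot.2.2.2 x, Finset.mem_union]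
  · have hlinks : cycleLinks ((w :: tS) ++ (w :: tA)) =
        cycleLinks (w :: tS) ++ cycleLinks (w :: tA) := by
      have e1 : (w :: tS) ++ (w :: tA) = w :: (tS ++ w :: tA) := List.cons_append
      rw [e1, cycleLinks_cons, chain2_split, cycleLinks_cons, cycleLinks_cons]
    have : cycleCost c ((w :: tS) ++ (w :: tA)) = cycleCost c lS + cycleCost c lA := by
      rw [← cycleCost_rotate c lS kS, ← cycleCost_rotate c lA kA, hS', hA',
        cycleCost, cycleCost, cycleCost, hlinks, List.map_append, List.sum_append]
    exact le_of_eq this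

/-- Cycle Merging Lemma: if `F_S` is a directed cycle on `S ∋ r` and `F_A` a directed cycle
on `A`, with `S` and `A` intersecting as hyper-links, then there is a directed cycle on
`S ∪ A` of cost at most `c(F_S) + c(F_A)`. -/
theorem stmt11 (n : ℕ) (hn : 3 ≤ n) (c : ℕ × ℕ → ℝ)
    (hc0 : ∀ f : ℕ × ℕ, 0 ≤ c f)
    (hmono : ∀ f g : ℕ × ℕ, Shortening f g → c f ≤ c g)
    (S A : Finset ℕ) (hS : ∀ x ∈ S, x < n) (hA : ∀ x ∈ A, x < n)
    (hS2 : 2 ≤ S.card) (hA2 : 2 ≤ A.card) (hrS : 0 ∈ S)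
    (hint : Intersecting S A)
    (lS lA : List ℕ) (hlS : IsDirCycleOn n S lS) (hlA : IsDirCycleOn n A lA) :
    ∃ l : List ℕ, IsDirCycleOn n (S ∪ A) l ∧
      cycleCost c l ≤ cycleCost c lS + cycleCost c lA := by
  by_cases hdis : (S ∩ A).Nonempty
  · obtain ⟨w, hw⟩ := hdis
    exact splice_common n c S A lS lA hlS hlA w
      (Finset.mem_inter.mp hw).1 (Finset.mem_inter.mp hw).2
  · have hdisj : ∀ z : ℕ, z ∈ S → z ∈ A → False := fun z h1 h2 =>
      hdis ⟨z, Finset.mem_inter.mpr ⟨h1, h2⟩⟩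
    rcases hint with h | ⟨⟨x, hxS, y₁, hy₁, y₂, hy₂, hxy₁, hxy₂⟩, -⟩
    · exact absurd h hdis
    have hAne : A.Nonempty := ⟨y₁, hy₁⟩
    set m := A.min' hAne with hm
    set M := A.max' hAne with hM
    have hmA : m ∈ A := A.min'_mem hAne
    have hMA : M ∈ A := A.max'_mem hAne
    have hmx : m < x := lt_of_le_of_lt (A.min'_le y₁ hy₁) hxy₁
    have hxM : x < M := lt_of_lt_of_le hxy₂ (A.le_max' y₂ hy₂)
    have h0 : (0 : ℕ) ∈ lS := (hlS.2.2.2 0).mpr hrS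
    have hxl : x ∈ lS := (hlS.2.2.2 x).mpr hxS
    obtain ⟨⟨a, b⟩, hab, hPa, hPb⟩ :=
      cycle_exit (fun z => m < z ∧ z < M) lS x 0 hxl h0 ⟨hmx, hxM⟩ (by omega)
    simp only at hPa hPb
    have haS : a ∈ S := (hlS.2.2.2 a).mp (List.of_mem_zip hab).1
    have hbS : b ∈ S := (hlS.2.2.2 b).mp (List.mem_rotate.mp (List.of_mem_zip hab).2)
    have hma : m < a := hPa.1
    have haM : a < M := hPa.2
    have hbm : b ≠ m := fun h => hdisj b hbS (h ▸ hmA)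
    have hbM : b ≠ M := fun h => hdisj b hbS (h ▸ hMA)
    have hbcase : b < m ∨ M < b := by
      rcases not_and_or.mp hPb with h | h <;> omega
    have hml : m ∈ lA := (hlA.2.2.2 m).mpr hmA
    have hMl : M ∈ lA := (hlA.2.2.2 M).mpr hMA
    rcases hbcase with hb | hb
    · obtain ⟨⟨u, v⟩, huv, hua, hva⟩ :=
        cycle_exit (fun z => z < a) lA m M hml hMl hma (by omega)
      simp only at hua hva
      have huA : u ∈ A := (hlA.2.2.2 u).mp (List.of_mem_zip huv).1
      have hvA : v ∈ A := (hlA.2.2.2 v).mp (List.mem_rotate.mp (List.of_mem_zip huv).2)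
      have hav : a ≠ v := fun h => hdisj a haS (h ▸ hvA)
      have hub : u ≠ b := fun h => hdisj b hbS (h ▸ huA)
      have hmu : m ≤ u := A.min'_le u huA
      have h1 : c (a, v) ≤ c (u, v) := by
        refine hmono _ _ ?_
        unfold Shortening
        refine ⟨rfl, hav, ?_, ?_⟩ <;> simp <;> omega
      have h2 : c (u, b) ≤ c (a, b) := by
        refine hmono _ _ ?_
        unfold Shortening
        refine ⟨rfl, hub, ?_, ?_⟩ <;> simp <;> omega
      exact splice n c S A lS lA hlS hlA a b u v hab huv h1 h2 hub hav
    · obtain ⟨⟨u, v⟩, huv, hua, hva⟩ :=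
        cycle_exit (fun z => a < z) lA M m hMl hml haM (by omega)
      simp only at hua hva
      have huA : u ∈ A := (hlA.2.2.2 u).mp (List.of_mem_zip huv).1
      have hvA : v ∈ A := (hlA.2.2.2 v).mp (List.mem_rotate.mp (List.of_mem_zip huv).2)
      have hav : a ≠ v := fun h => hdisj a haS (h ▸ hvA)
      have hub : u ≠ b := fun h => hdisj b hbS (h ▸ huA)
      have huM : u ≤ M := A.le_max' u huA
      have h1 : c (a, v) ≤ c (u, v) := by
        refine hmono _ _ ?_
        unfold Shortening
        refine ⟨rfl, hav, ?_, ?_⟩ <;> simp <;> omega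
      have h2 : c (u, b) ≤ c (a, b) := by
        refine hmono _ _ ?_
        unfold Shortening
        refine ⟨rfl, hub, ?_, ?_⟩ <;> simp <;> omega
      exact splice n c S A lS lA hlS hlA a b u v hab huv h1 h2 hub hav
end

section
/- Let F be a feasible R-special directed solution. Then for any two distinct terminals v, w ∈ R, either w is v-good or v is w-good (i.e., w ∉ I_v or v ∉ I_w). -/
/-- `Reach F u v`: there is a directed path of links of `F` from `u` to `v`. -/
def Reach (F : Finset (ℕ × ℕ)) (u v : ℕ) : Prop :=
  Relation.ReflTransGen (fun a b => (a, b) ∈ F) u v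

/-- A directed link `(u,v)` enters a cut `C` if `v ∈ C` and `u ∉ C`. -/
def Enters (f : ℕ × ℕ) (C : Set ℕ) : Prop := f.2 ∈ C ∧ f.1 ∉ C

/-- Two directed links cross if their intervals `[a,b]`, `[c,d]` satisfy
`a < c < b < d` or `c < a < d < b`. -/
def Crosses (f g : ℕ × ℕ) : Prop :=
  (min f.1 f.2 < min g.1 g.2 ∧ min g.1 g.2 < max f.1 f.2 ∧ max f.1 f.2 < max g.1 g.2) ∨
    (min g.1 g.2 < min f.1 f.2 ∧ min f.1 f.2 < max g.1 g.2 ∧ max g.1 g.2 < max f.1 f.2)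

/-- `F` is an `R`-special directed solution (with root `r = 0`):
(1) the endpoints of every link are distinct and lie in `R`;
(2) `(R, F)` is an `r`-out arborescence;
(3) no two links of `F` cross;
(4) no two links of `F` leaving the same vertex go in the same direction. -/
def RSpecial (R : Finset ℕ) (F : Finset (ℕ × ℕ)) : Prop :=
  (∀ f ∈ F, f.1 ≠ f.2 ∧ f.1 ∈ R ∧ f.2 ∈ R) ∧
    (∀ f ∈ F, f.2 ≠ 0) ∧
    (∀ v ∈ R, v ≠ 0 → ∃! f : ℕ × ℕ, f ∈ F ∧ f.2 = v) ∧
    (∀ v ∈ R, Reach F 0 v) ∧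
    (∀ f ∈ F, ∀ g ∈ F, f ≠ g → ¬Crosses f g) ∧
    (∀ f ∈ F, ∀ g ∈ F, f ≠ g → f.1 = g.1 →
      ¬((f.1 < f.2 ∧ g.1 < g.2) ∨ (f.2 < f.1 ∧ g.2 < g.1)))

/-- A ring-cut is an interval `{a, …, b}` with `1 ≤ a ≤ b ≤ n-1`. -/
def IsRingCut (n : ℕ) (C : Set ℕ) : Prop :=
  ∃ a b : ℕ, 1 ≤ a ∧ a ≤ b ∧ b ≤ n - 1 ∧ C = Set.Icc a b

/-- `F` is feasible: every dangerous ring-cut is entered by some link of `F`. -/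
def FeasibleDir (n : ℕ) (R : Finset ℕ) (F : Finset (ℕ × ℕ)) : Prop :=
  ∀ C : Set ℕ, IsRingCut n C → (C ∩ ↑R).Nonempty → ∃ f ∈ F, Enters f C

/-- A link `f = (u,v) ∈ F` is responsible for a cut `C` if it enters `C` and no link on the
unique directed path in `(R,F)` from the root to `u` (i.e. no link of `F` whose head is an
ancestor of `u`) enters `C`. -/
def Responsible (F : Finset (ℕ × ℕ)) (f : ℕ × ℕ) (C : Set ℕ) : Prop :=
  f ∈ F ∧ Enters f C ∧ ∀ g ∈ F, Reach F g.2 f.1 → ¬Enters g C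

/-- `[a, b]` is the `v`-bad interval `I_v`: the maximal interval of `V(H)` containing `v`
that contains no terminal which is not a descendant of `v`. -/
def IsBadInterval (n : ℕ) (R : Finset ℕ) (F : Finset (ℕ × ℕ)) (v a b : ℕ) : Prop :=
  a ≤ v ∧ v ≤ b ∧ b ≤ n - 1 ∧ (∀ w ∈ R, a ≤ w → w ≤ b → Reach F v w) ∧
    ∀ a' b' : ℕ, a' ≤ a → b ≤ b' → b' ≤ n - 1 →
      (∀ w ∈ R, a' ≤ w → w ≤ b' → Reach F v w) → a' = a ∧ b' = b

open Classical in
lemma exists_badInterval (n : ℕ) (R : Finset ℕ) (F : Finset (ℕ × ℕ))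
    (v : ℕ) (hv : v ≤ n - 1) : ∃ a b, IsBadInterval n R F v a b := by
  set P : ℕ → Prop := fun a => ∀ w ∈ R, a ≤ w → w ≤ v → Reach F v w with hPdef
  set Q : ℕ → Prop := fun b => ∀ w ∈ R, v ≤ w → w ≤ b → Reach F v w with hQdef
  have hPv : P v := by
    intro w _ h1 h2
    have : w = v := le_antisymm h2 h1
    subst this; exact Relation.ReflTransGen.refl
  have hQv : Q v := by
    intro w _ h1 h2
    have : w = v := le_antisymm h2 h1
    subst this; exact Relation.ReflTransGen.refl
  have hPex : ∃ a, P a := ⟨v, hPv⟩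
  set a₀ := Nat.find hPex with ha₀
  set b₀ := Nat.findGreatest Q (n - 1) with hb₀
  have hav : a₀ ≤ v := Nat.find_min' hPex hPv
  have hPa : P a₀ := Nat.find_spec hPex
  have hvb : v ≤ b₀ := Nat.le_findGreatest hv hQv
  have hQb : Q b₀ := Nat.findGreatest_spec hv hQv
  have hbn : b₀ ≤ n - 1 := Nat.findGreatest_le (n - 1)
  refine ⟨a₀, b₀, hav, hvb, hbn, ?_, ?_⟩
  · intro w hw h1 h2
    rcases le_total w v with h | h
    · exact hPa w hw h1 h
    · exact hQb w hw h h2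
  · intro a' b' ha' hb' hbn' H
    constructor
    · have hPa' : P a' := fun w hw h1 h2 => H w hw h1 (h2.trans (hvb.trans hb'))
      exact le_antisymm ha' (Nat.find_min' hPex hPa')
    · have hQb' : Q b' := fun w hw h1 h2 => H w hw ((ha'.trans hav).trans h1) h2
      exact le_antisymm (Nat.le_findGreatest hbn' hQb') hb'

lemma reach_antisymm (R : Finset ℕ) (F : Finset (ℕ × ℕ)) (hsp : RSpecial R F)
    (v : ℕ) (hv : v ∈ R) (w : ℕ) (h1 : Reach F v w) (h2 : Reach F w v) : v = w := by
  by_contra hne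
  obtain ⟨hends, hne0, huniq, hreach, -, -⟩ := hsp
  set C : Set ℕ := {x | Reach F v x ∧ Reach F x v} with hC
  have hinC : ∀ x ∈ C, ∃ p ∈ C, (p, x) ∈ F := by
    intro x hx
    by_cases hxv : x = v
    · subst hxv
      rcases Relation.ReflTransGen.cases_tail h2 with h | ⟨c, hc, hcx⟩
      · exact absurd h hne
      · exact ⟨c, ⟨h1.trans hc, Relation.ReflTransGen.single hcx⟩, hcx⟩
    · rcases Relation.ReflTransGen.cases_tail hx.1 with h | ⟨c, hc, hcx⟩
      · exact absurd h hxv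
      · exact ⟨c, ⟨hc, (Relation.ReflTransGen.single hcx).trans hx.2⟩, hcx⟩
  have h0 : (0 : ℕ) ∉ C := by
    intro h
    obtain ⟨p, -, hpF⟩ := hinC 0 h
    exact hne0 _ hpF rfl
  have key : ∀ x, Reach F 0 x → x ∉ C := by
    intro x hx
    induction hx with
    | refl => exact h0
    | tail hb hbc ih =>
      rename_i b c
      intro hcC
      obtain ⟨p, hpC, hpF⟩ := hinC c hcC
      have hcR : c ∈ R := (hends _ hbc).2.2
      have hc0 : c ≠ 0 := by rintro rfl; exact h0 hcC
      obtain ⟨f, -, hfu⟩ := huniq c hcR hc0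
      have e1 : (b, c) = f := hfu (b, c) ⟨hbc, rfl⟩
      have e2 : (p, c) = f := hfu (p, c) ⟨hpF, rfl⟩
      have : b = p := by
        have := e1.trans e2.symm
        exact (Prod.mk.injEq .. ▸ this).1
      exact ih (this ▸ hpC)
  exact key v (hreach v hv) ⟨Relation.ReflTransGen.refl, Relation.ReflTransGen.refl⟩

/-- For a feasible `R`-special directed solution, for any two distinct terminals `v, w ∈ R`,
either `w` is `v`-good (`w ∉ I_v`) or `v` is `w`-good (`v ∉ I_w`). -/
theorem stmt13 (n : ℕ) (hn : 3 ≤ n) (R : Finset ℕ) (hR : R ⊆ Finset.range n) (hr : 0 ∈ R)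
    (F : Finset (ℕ × ℕ)) (hsp : RSpecial R F) (hfeas : FeasibleDir n R F) :
    ∀ v ∈ R, ∀ w ∈ R, v ≠ w →
      (∃ a b : ℕ, IsBadInterval n R F v a b ∧ w ∉ Set.Icc a b) ∨
        (∃ a b : ℕ, IsBadInterval n R F w a b ∧ v ∉ Set.Icc a b) := by
  intro v hvR w hwR hvw
  have hv' : v ≤ n - 1 := by have := Finset.mem_range.1 (hR hvR); omega
  have hw' : w ≤ n - 1 := by have := Finset.mem_range.1 (hR hwR); omega
  by_cases hvwR : Reach F v w
  · have hnwv : ¬Reach F w v := fun h => hvw (reach_antisymm R F hsp v hvR w hvwR h)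
    right
    obtain ⟨a, b, hbad⟩ := exists_badInterval n R F w hw'
    refine ⟨a, b, hbad, fun hmem => hnwv ?_⟩
    exact hbad.2.2.2.1 v hvR hmem.1 hmem.2
  · left
    obtain ⟨a, b, hbad⟩ := exists_badInterval n R F v hv'
    refine ⟨a, b, hbad, fun hmem => hvwR ?_⟩
    exact hbad.2.2.2.1 w hwR hmem.1 hmem.2
end
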